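/- Let f be a real-valued function on the positive orthant ℝⁿ_{>0} that is differentiable at every point of the orthant. Then f is geodesically convex with respect to the log-barrier metric — that is, for all p, q ∈ ℝⁿ_{>0} the function t ↦ f(γ_{pq}(t)) is convex on [0,1], where γ_{pq}(t)ᵢ = pᵢ·(qᵢ/pᵢ)^t — if and only if for all p, q ∈ ℝⁿ_{>0} one has f(p) + Df(p)[v] ≤ f(q), where Df(p) is the derivative of f at p and v ∈ ℝⁿ is the tangent vector of the geodesic at p, namely vᵢ = pᵢ·log(qᵢ/pᵢ). -/
import Mathlib

/-- first-order characterization of geodesic convexity on the positive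
orthant with the log-barrier metric.  A differentiable function `f` is geodesically
convex (its restriction to every geodesic `γ_{pq}(t)ᵢ = pᵢ·(qᵢ/pᵢ)^t` is convex on
`[0,1]`) iff for all `p, q` in the orthant,
`f(p) + Df(p)[v] ≤ f(q)` where `vᵢ = pᵢ·log(qᵢ/pᵢ)`. -/
theorem gconvex_first_order_characterization (n : ℕ) (f : (Fin n → ℝ) → ℝ)
    (hf : ∀ x : Fin n → ℝ, (∀ i, 0 < x i) → DifferentiableAt ℝ f x) :
    (∀ p q : Fin n → ℝ, (∀ i, 0 < p i) → (∀ i, 0 < q i) →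
      ConvexOn ℝ (Set.Icc (0 : ℝ) 1)
        (fun t : ℝ => f (fun i => p i * (q i / p i) ^ t))) ↔
    (∀ p q : Fin n → ℝ, (∀ i, 0 < p i) → (∀ i, 0 < q i) →
      f p + fderiv ℝ f p (fun i => p i * Real.log (q i / p i)) ≤ f q) := by
  -- derivative of the composition along the geodesic
  have key : ∀ (p q : Fin n → ℝ), (∀ i, 0 < p i) → (∀ i, 0 < q i) → ∀ s : ℝ,
      HasDerivAt (fun t : ℝ => f (fun i => p i * (q i / p i) ^ t))
        (fderiv ℝ f (fun i => p i * (q i / p i) ^ s)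
          (fun i => p i * (q i / p i) ^ s * Real.log (q i / p i))) s := by
    intro p q hp hq s
    have hpos : ∀ t : ℝ, ∀ i, 0 < p i * (q i / p i) ^ t := fun t i =>
      mul_pos (hp i) (Real.rpow_pos_of_pos (div_pos (hq i) (hp i)) t)
    have hγ : HasDerivAt (fun t : ℝ => (fun i => p i * (q i / p i) ^ t))
        (fun i => p i * (q i / p i) ^ s * Real.log (q i / p i)) s := by
      rw [hasDerivAt_pi]
      intro i
      have h1 := (Real.hasStrictDerivAt_const_rpow (div_pos (hq i) (hp i)) s).hasDerivAt
      simpa [mul_assoc] using h1.const_mul (p i)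
    exact ((hf _ (hpos s)).hasFDerivAt.comp_hasDerivAt s hγ)
  constructor
  · -- geodesic convexity → first-order condition
    intro h p q hp hq
    have hg0 : HasDerivAt (fun t : ℝ => f (fun i => p i * (q i / p i) ^ t))
        (fderiv ℝ f p (fun i => p i * Real.log (q i / p i))) 0 := by
      have := key p q hp hq 0
      simpa [Real.rpow_zero] using this
    have hslope := (h p q hp hq).le_slope_of_hasDerivAt
      (x := 0) (y := 1) (by simp) (by simp) zero_lt_one hg0
    have h0 : (fun i => p i * (q i / p i) ^ (0:ℝ)) = p := by
      funext i; simp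
    have h1 : (fun i => p i * (q i / p i) ^ (1:ℝ)) = q := by
      funext i
      rw [Real.rpow_one, mul_comm, div_mul_cancel₀ _ (hp i).ne']
    rw [slope_def_field] at hslope
    simp only [h0, h1] at hslope
    have : (f q - f p) / (1 - 0) = f q - f p := by ring
    rw [this] at hslope
    linarith
  · -- first-order condition → geodesic convexity
    intro h p q hp hq
    set g : ℝ → ℝ := fun t : ℝ => f (fun i => p i * (q i / p i) ^ t) with hg
    set D : ℝ → ℝ := fun s : ℝ => fderiv ℝ f (fun i => p i * (q i / p i) ^ s)
          (fun i => p i * (q i / p i) ^ s * Real.log (q i / p i)) with hD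
    have hpos : ∀ t : ℝ, ∀ i, 0 < p i * (q i / p i) ^ t := fun t i =>
      mul_pos (hp i) (Real.rpow_pos_of_pos (div_pos (hq i) (hp i)) t)
    have hder : ∀ s : ℝ, HasDerivAt g (D s) s := key p q hp hq
    -- tangent line lies below the function
    have step : ∀ s t : ℝ, g s + (t - s) * D s ≤ g t := by
      intro s t
      have h1 := h (fun i => p i * (q i / p i) ^ s) (fun i => p i * (q i / p i) ^ t)
        (hpos s) (hpos t)
      have hvec : (fun i => (p i * (q i / p i) ^ s) *
            Real.log ((p i * (q i / p i) ^ t) / (p i * (q i / p i) ^ s)))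
          = (t - s) • (fun i => p i * (q i / p i) ^ s * Real.log (q i / p i)) := by
        funext i
        have hc : (0:ℝ) < q i / p i := div_pos (hq i) (hp i)
        have : (p i * (q i / p i) ^ t) / (p i * (q i / p i) ^ s)
            = (q i / p i) ^ (t - s) := by
          rw [mul_div_mul_left _ _ (hp i).ne', ← Real.rpow_sub hc]
        rw [this, Real.log_rpow hc]
        simp [Pi.smul_apply]
        ring
      rw [hvec, map_smul] at h1
      simpa [smul_eq_mul] using h1
    -- the derivative is monotone
    have hmono : ∀ s t : ℝ, s < t → D s ≤ D t := by
      intro s t hst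
      have h1 := step s t
      have h2 := step t s
      have hts : 0 < t - s := by linarith
      nlinarith
    have hdiff : Differentiable ℝ g := fun s => (hder s).differentiableAt
    apply MonotoneOn.convexOn_of_deriv (convex_Icc 0 1)
      (hdiff.continuous.continuousOn) (hdiff.differentiableOn)
    intro a _ b _ hab
    rcases eq_or_lt_of_le hab with rfl | hab'
    · exact le_refl _
    · rw [(hder a).deriv, (hder b).deriv]
      exact hmono a b hab'
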